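/- Let S : (α, π) → End(ℝⁿ) be differentiable, self-adjoint valued, satisfying S' + S² + R = 0 with R(t) self-adjoint and trace R(t) ≥ n for all t. If the normalized trace s(t) = (1/n)trace S(t) equals cot(t) for all t ∈ (α, π), then S(t) = cot(t)·id and R(t) = id for all t ∈ (α, π). -/

import Mathlib

open Real Set

/-- Trace of a continuous linear endomorphism. -/
noncomputable def clmTrace (n : ℕ)
    (A : EuclideanSpace ℝ (Fin n) →L[ℝ] EuclideanSpace ℝ (Fin n)) : ℝ :=
  LinearMap.trace ℝ (EuclideanSpace ℝ (Fin n)) (A : EuclideanSpace ℝ (Fin n) →ₗ[ℝ] EuclideanSpace ℝ (Fin n))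

section aux
variable {n : ℕ}
local notation "E" => EuclideanSpace ℝ (Fin n)

lemma clmTrace_eq_sum (A : E →L[ℝ] E) :
    clmTrace n A = ∑ i, inner ℝ ((EuclideanSpace.basisFun (Fin n) ℝ) i)
      (A ((EuclideanSpace.basisFun (Fin n) ℝ) i)) := by
  set b := EuclideanSpace.basisFun (Fin n) ℝ
  rw [clmTrace, LinearMap.trace_eq_matrix_trace ℝ b.toBasis, Matrix.trace]
  refine Finset.sum_congr rfl fun i _ => ?_
  rw [Matrix.diag_apply, LinearMap.toMatrix_apply, b.coe_toBasis,
    b.coe_toBasis_repr_apply, b.repr_apply_apply]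
  rfl

lemma clmTrace_id : clmTrace n (ContinuousLinearMap.id ℝ E) = n := by
  rw [clmTrace]
  simp [LinearMap.trace_id]

lemma clmTrace_smul (c : ℝ) (A : E →L[ℝ] E) : clmTrace n (c • A) = c * clmTrace n A := by
  rw [clmTrace, clmTrace]; simp

lemma clmTrace_add (A B : E →L[ℝ] E) : clmTrace n (A + B) = clmTrace n A + clmTrace n B := by
  rw [clmTrace, clmTrace, clmTrace]; simp

lemma clmTrace_sub (A B : E →L[ℝ] E) : clmTrace n (A - B) = clmTrace n A - clmTrace n B := by
  rw [clmTrace, clmTrace, clmTrace]; simp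

lemma clmTrace_sq_nonneg (B : E →L[ℝ] E) (hB : LinearMap.IsSymmetric (B : E →ₗ[ℝ] E)) :
    0 ≤ clmTrace n (B ∘L B) ∧ (clmTrace n (B ∘L B) = 0 → B = 0) := by
  set b := EuclideanSpace.basisFun (Fin n) ℝ
  have key : clmTrace n (B ∘L B) = ∑ i, ‖B (b i)‖ ^ 2 := by
    rw [clmTrace_eq_sum]
    refine Finset.sum_congr rfl fun i _ => ?_
    simp only [ContinuousLinearMap.comp_apply]
    have h1 : inner ℝ ((EuclideanSpace.basisFun (Fin n) ℝ) i)
        (B (B ((EuclideanSpace.basisFun (Fin n) ℝ) i))) = inner ℝ (B (b i)) (B (b i)) :=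
      (hB _ _).symm
    rw [h1, real_inner_self_eq_norm_sq]
  constructor
  · rw [key]; positivity
  · intro h0
    rw [key] at h0
    have hz : ∀ i, B (b i) = 0 := by
      intro i
      have := (Finset.sum_eq_zero_iff_of_nonneg (fun i _ => by positivity)).mp h0 i (Finset.mem_univ i)
      have : ‖B (b i)‖ = 0 := by nlinarith [norm_nonneg (B (b i))]
      simpa using this
    apply ContinuousLinearMap.coe_injective
    refine b.toBasis.ext fun i => ?_
    simpa [b.coe_toBasis] using hz i

set_option synthInstance.maxHeartbeats 1000000 in
lemma expand_sq (A : E →L[ℝ] E) (c : ℝ) :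
    clmTrace n ((A - c • ContinuousLinearMap.id ℝ E) ∘L (A - c • ContinuousLinearMap.id ℝ E))
      = clmTrace n (A ∘L A) - 2 * c * clmTrace n A + c ^ 2 * n := by
  have : (A - c • ContinuousLinearMap.id ℝ E) ∘L (A - c • ContinuousLinearMap.id ℝ E)
      = A ∘L A - c • A - c • A + (c * c) • ContinuousLinearMap.id ℝ E := by
    refine ContinuousLinearMap.ext fun x => ?_
    simp only [ContinuousLinearMap.comp_apply, ContinuousLinearMap.sub_apply,
      ContinuousLinearMap.add_apply, ContinuousLinearMap.smul_apply,
      ContinuousLinearMap.coe_id', id_eq, map_sub, map_smul]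
    module
  rw [this]
  simp only [clmTrace_add, clmTrace_sub, clmTrace_smul, clmTrace_id]
  ring

end aux

section aux2
variable {n : ℕ}
local notation "E" => EuclideanSpace ℝ (Fin n)

lemma clmTrace_zero : clmTrace n (0 : E →L[ℝ] E) = 0 := by
  rw [clmTrace]; simp

/-- trace as a continuous linear map -/
noncomputable def traceCLM (n : ℕ) :
    (EuclideanSpace ℝ (Fin n) →L[ℝ] EuclideanSpace ℝ (Fin n)) →L[ℝ] ℝ :=
  LinearMap.toContinuousLinearMap
    { toFun := fun A => clmTrace n A
      map_add' := clmTrace_add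
      map_smul' := fun c A => clmTrace_smul c A }

lemma traceCLM_apply (A : E →L[ℝ] E) : traceCLM n A = clmTrace n A := rfl

lemma hasDerivAt_clmTrace {S : ℝ → E →L[ℝ] E} {S' : E →L[ℝ] E} {t : ℝ}
    (h : HasDerivAt S S' t) :
    HasDerivAt (fun u => clmTrace n (S u)) (clmTrace n S') t := by
  have := (traceCLM n).hasFDerivAt.comp_hasDerivAt t h
  exact this

lemma hasDerivAt_cot {t : ℝ} (h : Real.sin t ≠ 0) :
    HasDerivAt Real.cot (-(1 / Real.sin t ^ 2)) t := by
  have h1 : HasDerivAt (fun x => Real.cos x / Real.sin x)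
      ((-Real.sin t * Real.sin t - Real.cos t * Real.cos t) / Real.sin t ^ 2) t :=
    (Real.hasDerivAt_cos t).div (Real.hasDerivAt_sin t) h
  have h2 : (fun x => Real.cos x / Real.sin x) = Real.cot := by
    funext x; rw [Real.cot_eq_cos_div_sin]
  rw [h2] at h1
  convert h1 using 1
  have := Real.sin_sq_add_cos_sq t
  field_simp
  nlinarith
end aux2

open Filter Topology


set_option maxHeartbeats 1000000 in
/-- If a self-adjoint solution of the operator Riccati equation `S' + S² + R = 0`, with
`R` self-adjoint and `trace R ≥ n`, has normalized trace `(1/n) trace S(t) = cot t` on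
`(α, π)`, then `S(t) = cot t • id` and `R(t) = id` there. -/
theorem stmt_8 (n : ℕ) (hn : 1 ≤ n) (α : ℝ)
    (S S' R : ℝ → EuclideanSpace ℝ (Fin n) →L[ℝ] EuclideanSpace ℝ (Fin n))
    (hS : ∀ t ∈ Set.Ioo α π, HasDerivAt S (S' t) t)
    (hsa : ∀ t ∈ Set.Ioo α π, IsSelfAdjoint (S t))
    (hRsa : ∀ t ∈ Set.Ioo α π, IsSelfAdjoint (R t))
    (htrR : ∀ t ∈ Set.Ioo α π, (n : ℝ) ≤ clmTrace n (R t))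
    (hric : ∀ t ∈ Set.Ioo α π, S' t + S t ∘L S t + R t = 0)
    (htr : ∀ t ∈ Set.Ioo α π, (1 / n : ℝ) * clmTrace n (S t) = Real.cot t) :
    ∀ t ∈ Set.Ioo α π,
      S t = Real.cot t • ContinuousLinearMap.id ℝ (EuclideanSpace ℝ (Fin n)) ∧
      R t = ContinuousLinearMap.id ℝ (EuclideanSpace ℝ (Fin n)) := by
  have hnpos : (0 : ℝ) < n := by exact_mod_cast Nat.lt_of_lt_of_le Nat.zero_lt_one hn
  have hnne : (n : ℝ) ≠ 0 := ne_of_gt hnpos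
  set e := ContinuousLinearMap.id ℝ (EuclideanSpace ℝ (Fin n)) with he
  -- Step 0: sin has no zeros in (α, π)
  have hsin : ∀ t ∈ Set.Ioo α π, Real.sin t ≠ 0 := by
    intro z hz hsz
    obtain ⟨k, hk⟩ := Real.sin_eq_zero_iff.mp hsz
    have hπ := Real.pi_pos
    set m := min (z + π) π with hm
    have hzm : z < m := lt_min (by linarith) hz.2
    have hsub : Set.Ioo z m ⊆ Set.Ioo α π := fun u hu =>
      ⟨lt_trans hz.1 hu.1, lt_of_lt_of_le hu.2 (min_le_right _ _)⟩
    have hsinu : ∀ u ∈ Set.Ioo z m, Real.sin u ≠ 0 := by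
      intro u hu hsu
      obtain ⟨j, hj⟩ := Real.sin_eq_zero_iff.mp hsu
      have h1 : (k : ℝ) * π < (j : ℝ) * π := by rw [hk, hj]; exact hu.1
      have h2 : (k : ℝ) < j := lt_of_mul_lt_mul_right h1 (le_of_lt hπ)
      have h3 : k < j := by exact_mod_cast h2
      have h4 : (k : ℝ) + 1 ≤ j := by exact_mod_cast h3
      have h5 : z + π ≤ u := by
        rw [← hk, ← hj]; nlinarith
      have h6 : u < z + π := lt_of_lt_of_le hu.2 (min_le_left _ _)
      linarith
    -- the function sin * (1/n)*trace S is continuous at z, equals cos on Ioo z m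
    have hcontf : ContinuousAt (fun u => (1 / n : ℝ) * clmTrace n (S u)) z :=
      ((hasDerivAt_clmTrace (hS z hz)).const_mul ((1 : ℝ) / n)).continuousAt
    set g := fun u => Real.sin u * ((1 / n : ℝ) * clmTrace n (S u)) with hg
    have hgz : g z = 0 := by simp [hg, hsz]
    have h1 : Tendsto g (𝓝[>] z) (𝓝 0) := by
      rw [← hgz]
      exact ((Real.continuous_sin.continuousAt.mul hcontf).tendsto).mono_left
        nhdsWithin_le_nhds
    have hmem : Set.Ioo z m ∈ 𝓝[>] z := Ioo_mem_nhdsGT hzm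
    have h2 : g =ᶠ[𝓝[>] z] Real.cos := by
      filter_upwards [hmem] with u hu
      have hu' := hsub hu
      rw [hg]
      simp only
      rw [htr u hu', Real.cot_eq_cos_div_sin]
      have := hsinu u hu
      field_simp
    have h3 : Tendsto Real.cos (𝓝[>] z) (𝓝 (Real.cos z)) :=
      Real.continuous_cos.continuousAt.tendsto.mono_left nhdsWithin_le_nhds
    have h4 : Real.cos z = 0 :=
      tendsto_nhds_unique h3 (h1.congr' h2)
    nlinarith [Real.sin_sq_add_cos_sq z]
  -- Step 1: S t = cot t • id
  have hSid : ∀ t ∈ Set.Ioo α π, S t = Real.cot t • e := by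
    intro t ht
    have hst := hsin t ht
    set c := Real.cot t with hc
    -- derivative of trace
    have hio : Set.Ioo α π ∈ 𝓝 t := isOpen_Ioo.mem_nhds ht
    have hder : HasDerivAt (fun u => (1 / n : ℝ) * clmTrace n (S u))
        ((1 / n : ℝ) * clmTrace n (S' t)) t :=
      (hasDerivAt_clmTrace (hS t ht)).const_mul _
    have heq : (fun u => (1 / n : ℝ) * clmTrace n (S u)) =ᶠ[𝓝 t] Real.cot := by
      filter_upwards [hio] with u hu using htr u hu
    have hder2 : HasDerivAt Real.cot ((1 / n : ℝ) * clmTrace n (S' t)) t :=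
      heq.hasDerivAt_iff.mp hder
    have huniq : (1 / n : ℝ) * clmTrace n (S' t) = -(1 / Real.sin t ^ 2) :=
      hder2.unique (hasDerivAt_cot hst)
    have htrS' : clmTrace n (S' t) = -((n : ℝ) / Real.sin t ^ 2) := by
      field_simp at huniq ⊢
      linarith
    -- trace of the Riccati equation
    have htric : clmTrace n (S' t) + clmTrace n (S t ∘L S t) + clmTrace n (R t) = 0 := by
      have := congrArg (clmTrace n) (hric t ht)
      rwa [clmTrace_add, clmTrace_add, clmTrace_zero] at this
    have htrS : clmTrace n (S t) = n * c := by
      have := htr t ht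
      field_simp at this
      linarith
    have hcot2 : c ^ 2 = 1 / Real.sin t ^ 2 - 1 := by
      rw [hc, Real.cot_eq_cos_div_sin]
      have := Real.sin_sq_add_cos_sq t
      field_simp
      nlinarith
    -- trace((S - c id)²) ≤ 0
    have hBsa : LinearMap.IsSymmetric
        ((S t - c • e : EuclideanSpace ℝ (Fin n) →L[ℝ] EuclideanSpace ℝ (Fin n)) :
          EuclideanSpace ℝ (Fin n) →ₗ[ℝ] EuclideanSpace ℝ (Fin n)) := by
      intro x y
      have h1 := (hsa t ht).isSymmetric x y
      simp only [ContinuousLinearMap.coe_coe, ContinuousLinearMap.sub_apply,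
        ContinuousLinearMap.smul_apply, he, ContinuousLinearMap.coe_id', id_eq,
        inner_sub_left, inner_sub_right, real_inner_smul_left, real_inner_smul_right] at *
      rw [h1]
    obtain ⟨hpos, hz⟩ := clmTrace_sq_nonneg (S t - c • e) hBsa
    have hexp := expand_sq (S t) c
    rw [htrS] at hexp
    have hA2 : clmTrace n (S t ∘L S t) ≤ (n : ℝ) * c ^ 2 := by
      have hR := htrR t ht
      have : clmTrace n (S t ∘L S t) = (n : ℝ) / Real.sin t ^ 2 - clmTrace n (R t) := by
        rw [htrS'] at htric; linarith
      rw [this, hcot2]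
      have : (n : ℝ) * (1 / Real.sin t ^ 2 - 1) = n / Real.sin t ^ 2 - n := by ring
      rw [this]
      linarith
    have hB0 : clmTrace n ((S t - c • e) ∘L (S t - c • e)) = 0 := by
      rw [hexp] at hpos ⊢
      nlinarith
    have := hz hB0
    have : S t - c • e = 0 := this
    rw [sub_eq_zero] at this
    exact this
  -- Step 2: conclusion
  intro t ht
  refine ⟨hSid t ht, ?_⟩
  have hst := hsin t ht
  have hio : Set.Ioo α π ∈ 𝓝 t := isOpen_Ioo.mem_nhds ht
  have hder : HasDerivAt (fun u => Real.cot u • e) ((-(1 / Real.sin t ^ 2)) • e) t :=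
    (hasDerivAt_cot hst).smul_const e
  have heq : (fun u => Real.cot u • e) =ᶠ[𝓝 t] S := by
    filter_upwards [hio] with u hu using (hSid u hu).symm
  have hder2 : HasDerivAt S ((-(1 / Real.sin t ^ 2)) • e) t := heq.hasDerivAt_iff.mp hder
  have hS' : S' t = (-(1 / Real.sin t ^ 2)) • e := (hS t ht).unique hder2
  have hcot2 : Real.cot t ^ 2 = 1 / Real.sin t ^ 2 - 1 := by
    rw [Real.cot_eq_cos_div_sin]
    have := Real.sin_sq_add_cos_sq t
    field_simp
    nlinarith
  have hcomp : (Real.cot t • e) ∘L (Real.cot t • e) = (Real.cot t * Real.cot t) • e := by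
    refine ContinuousLinearMap.ext fun x => ?_
    simp [he, smul_smul]
  rw [show R t = -(S' t + S t ∘L S t) from (neg_eq_of_add_eq_zero_right (hric t ht)).symm]
  rw [hS', hSid t ht, hcomp]
  have hone : -(-(1 / Real.sin t ^ 2) + Real.cot t * Real.cot t) = 1 := by nlinarith [hcot2]
  refine ContinuousLinearMap.ext fun x => ?_
  simp only [ContinuousLinearMap.neg_apply, ContinuousLinearMap.add_apply,
    ContinuousLinearMap.smul_apply, he, ContinuousLinearMap.coe_id', id_eq]
  rw [← add_smul, ← neg_smul, hone, one_smul]
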